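/- Let q, t be invertible elements of a commutative ring R, and let V be the free R-module with basis v_{ij} for 1 ≤ i < j ≤ n. Define R-linear maps ρ(σ_i) for 1 ≤ i ≤ n-1 by Krammer's formulas: ρ(σ_i) v_{i,i+1} = t q² v_{i,i+1}; ρ(σ_i) v_{jk} = v_{jk} if {i,i+1} ∩ {j,k} = ∅; ρ(σ_i) v_{i+1,j} = v_{ij} for j ≠ i, i+1; ρ(σ_i) v_{j,i} = v_{j,i+1} for j < i; ρ(σ_i) v_{ij} = t q(q-1) v_{i,i+1} + (1-q) v_{ij} + q v_{i+1,j} for i+1 < j; ρ(σ_i) v_{ji} = (1-q) v_{ji} + q v_{j,i+1} + q(q-1) v_{i,i+1} for j < i. Then ρ(σ_i) ρ(σ_j) = ρ(σ_j) ρ(σ_i) whenever |i-j| ≥ 2. -/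

import Mathlib

/-- Index set for the Krammer basis: pairs `(a, b)` with `1 ≤ a < b ≤ n`. -/
def KIdx (n : ℕ) : Type := {p : ℕ × ℕ // 1 ≤ p.1 ∧ p.1 < p.2 ∧ p.2 ≤ n}

/-- The basis vector `v_{a b}` of the free module `KIdx n →₀ R`
(zero if the indices are out of range). -/
noncomputable def kv (R : Type*) [CommRing R] (n a b : ℕ) : KIdx n →₀ R :=
  if h : 1 ≤ a ∧ a < b ∧ b ≤ n then Finsupp.single ⟨(a, b), h⟩ 1 else 0

/-- Far commutation for the Krammer representation: if `ρ i` (for `1 ≤ i ≤ n-1`)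
acts on the basis `v_{ab}` (`1 ≤ a < b ≤ n`) by Krammer's formulas, then
`ρ i` and `ρ j` commute whenever `|i - j| ≥ 2`. -/
theorem stmt_3 {R : Type*} [CommRing R] (n : ℕ) (q t : R)
    (hq : IsUnit q) (ht : IsUnit t)
    (ρ : ℕ → ((KIdx n →₀ R) →ₗ[R] (KIdx n →₀ R)))
    (hA : ∀ i, 1 ≤ i → i + 1 ≤ n →
      ρ i (kv R n i (i+1)) = (t * q ^ 2) • kv R n i (i+1))
    (hB : ∀ i a b, 1 ≤ i → i + 1 ≤ n → 1 ≤ a → a < b → b ≤ n →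
      i ≠ a → i ≠ b → i + 1 ≠ a → i + 1 ≠ b → ρ i (kv R n a b) = kv R n a b)
    (hC1 : ∀ i b, 1 ≤ i → i + 1 < b → b ≤ n → ρ i (kv R n (i+1) b) = kv R n i b)
    (hC2 : ∀ i a, 1 ≤ a → a < i → i + 1 ≤ n → ρ i (kv R n a (i+1)) = kv R n a i)
    (hD1 : ∀ i b, 1 ≤ i → i + 1 < b → b ≤ n →
      ρ i (kv R n i b) =
        (t * q * (q - 1)) • kv R n i (i+1) + (1 - q) • kv R n i b
          + q • kv R n (i+1) b)
    (hD2 : ∀ i a, 1 ≤ a → a < i → i + 1 ≤ n →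
      ρ i (kv R n a i) =
        (1 - q) • kv R n a i + q • kv R n a (i+1)
          + (q * (q - 1)) • kv R n i (i+1)) :
    ∀ i j, 1 ≤ i → i + 1 ≤ n → 1 ≤ j → j + 1 ≤ n → (i + 2 ≤ j ∨ j + 2 ≤ i) →
      ρ i ∘ₗ ρ j = ρ j ∘ₗ ρ i := by
  have key : ∀ i j : ℕ, 1 ≤ i → i + 1 ≤ n → 1 ≤ j → j + 1 ≤ n → i + 2 ≤ j →
      ρ i ∘ₗ ρ j = ρ j ∘ₗ ρ i := by
    intro i j hi1 hin hj1 hjn hij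
    have fix : ∀ k a b : ℕ, 1 ≤ k → k + 1 ≤ n → 1 ≤ a → a < b → b ≤ n →
        (b < k ∨ k + 1 < a ∨ (a < k ∧ k + 1 < b)) → ρ k (kv R n a b) = kv R n a b := by
      intro k a b hk hkn ha hab hbn hcond
      exact hB k a b hk hkn ha hab hbn (by omega) (by omega) (by omega) (by omega)
    have comm : ∀ a b : ℕ, 1 ≤ a → a < b → b ≤ n →
        ρ i (ρ j (kv R n a b)) = ρ j (ρ i (kv R n a b)) := by
      intro a b ha hab hbn
      by_cases hbj : b < j
      · -- Case A : b < j, so ρ j fixes kv a b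
        by_cases hai : i = a
        · subst hai
          by_cases hbi : b = i + 1
          · subst hbi
            simp only [map_add, map_smul,
              fix j i (i+1) hj1 hjn ha hab hbn (by omega),
              hA i hi1 hin]
          · simp only [map_add, map_smul,
              fix j i b hj1 hjn ha hab hbn (by omega),
              hD1 i b hi1 (by omega) hbn,
              fix j i (i+1) hj1 hjn hi1 (by omega) hin (by omega),
              fix j (i+1) b hj1 hjn (by omega) (by omega) hbn (by omega)]
        · by_cases hai2 : a = i + 1
          · subst hai2
            simp only [map_add, map_smul,
              fix j (i+1) b hj1 hjn ha hab hbn (by omega),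
              hC1 i b hi1 (by omega) hbn,
              fix j i b hj1 hjn hi1 (by omega) hbn (by omega)]
          · by_cases hbi : b = i + 1
            · subst hbi
              simp only [map_add, map_smul,
                fix j a (i+1) hj1 hjn ha hab hbn (by omega),
                hC2 i a ha (by omega) hin,
                fix j a i hj1 hjn ha (by omega) (by omega) (by omega)]
            · by_cases hbi2 : i = b
              · subst hbi2
                simp only [map_add, map_smul,
                  fix j a i hj1 hjn ha hab hbn (by omega),
                  hD2 i a ha (by omega) hin,
                  fix j a (i+1) hj1 hjn ha (by omega) hin (by omega),
                  fix j i (i+1) hj1 hjn hi1 (by omega) hin (by omega)]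
              · simp only [map_add, map_smul,
                  fix j a b hj1 hjn ha hab hbn (by omega),
                  fix i a b hi1 hin ha hab hbn (by omega)]
      · by_cases hbj2 : j = b
        · -- Case B : b = j
          subst hbj2
          by_cases hai : i = a
          · subst hai
            simp only [map_add, map_smul,
              hD2 j i hi1 (by omega) hjn,
              hD1 i j hi1 (by omega) (by omega),
              hD1 i (j+1) hi1 (by omega) hjn,
              fix i j (j+1) hi1 hin hj1 (by omega) hjn (by omega),
              fix j i (i+1) hj1 hjn hi1 (by omega) hin (by omega),
              hC2 j i hi1 (by omega) hjn,
              hC2 j (i+1) (by omega) (by omega) hjn,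
              hD2 j (i+1) (by omega) (by omega) hjn,
              hC1 i j hi1 (by omega) (by omega),
              hC1 i (j+1) hi1 (by omega) hjn]
            module
          · by_cases hai2 : a = i + 1
            · subst hai2
              simp only [map_add, map_smul,
                hD2 j (i+1) (by omega) (by omega) hjn,
                hC1 i j hi1 (by omega) (by omega),
                hC1 i (j+1) hi1 (by omega) hjn,
                fix i j (j+1) hi1 hin hj1 (by omega) hjn (by omega),
                hD2 j i hi1 (by omega) hjn]
            · simp only [map_add, map_smul,
                hD2 j a ha (by omega) hjn,
                fix i a j hi1 hin ha hab (by omega) (by omega),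
                fix i a (j+1) hi1 hin ha (by omega) hjn (by omega),
                fix i j (j+1) hi1 hin hj1 (by omega) hjn (by omega)]
        · by_cases hbj3 : b = j + 1
          · -- Case C : b = j + 1
            subst hbj3
            by_cases haj : j = a
            · subst haj
              simp only [map_add, map_smul,
                hA j hj1 hjn,
                fix i j (j+1) hi1 hin hj1 (by omega) hjn (by omega)]
            · have haj' : a < j := by omega
              by_cases hai : i = a
              · subst hai
                simp only [map_add, map_smul,
                  hC2 j i hi1 (by omega) hjn,
                  hC2 j (i+1) (by omega) (by omega) hjn,
                  hD1 i j hi1 (by omega) (by omega),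
                  hD1 i (j+1) hi1 (by omega) hjn,
                  fix j i (i+1) hj1 hjn hi1 (by omega) hin (by omega)]
              · by_cases hai2 : a = i + 1
                · subst hai2
                  simp only [map_add, map_smul,
                    hC2 j (i+1) (by omega) (by omega) hjn,
                    hC2 j i hi1 (by omega) hjn,
                    hC1 i j hi1 (by omega) (by omega),
                    hC1 i (j+1) hi1 (by omega) hjn]
                · simp only [map_add, map_smul,
                    hC2 j a ha haj' hjn,
                    fix i a j hi1 hin ha haj' (by omega) (by omega),
                    fix i a (j+1) hi1 hin ha (by omega) hjn (by omega)]
          · have hbj4 : j + 1 < b := by omega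
            -- Case D : b > j + 1
            by_cases haj : j = a
            · subst haj
              simp only [map_add, map_smul,
                hD1 j b hj1 hbj4 hbn,
                fix i j (j+1) hi1 hin hj1 (by omega) hjn (by omega),
                fix i j b hi1 hin hj1 (by omega) hbn (by omega),
                fix i (j+1) b hi1 hin (by omega) hbj4 hbn (by omega)]
            · by_cases haj2 : a = j + 1
              · subst haj2
                simp only [map_add, map_smul,
                  hC1 j b hj1 hbj4 hbn,
                  fix i (j+1) b hi1 hin (by omega) hbj4 hbn (by omega),
                  fix i j b hi1 hin hj1 (by omega) hbn (by omega)]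
              · by_cases haj3 : j + 1 < a
                · simp only [map_add, map_smul,
                    fix j a b hj1 hjn ha hab hbn (by omega),
                    fix i a b hi1 hin ha hab hbn (by omega)]
                · have haj4 : a < j := by omega
                  by_cases hai : i = a
                  · subst hai
                    simp only [map_add, map_smul,
                      fix j i b hj1 hjn ha hab hbn (by omega),
                      hD1 i b hi1 (by omega) hbn,
                      fix j i (i+1) hj1 hjn hi1 (by omega) hin (by omega),
                      fix j (i+1) b hj1 hjn (by omega) (by omega) hbn (by omega)]
                  · by_cases hai2 : a = i + 1
                    · subst hai2
                      simp only [map_add, map_smul,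
                        fix j (i+1) b hj1 hjn ha hab hbn (by omega),
                        hC1 i b hi1 (by omega) hbn,
                        fix j i b hj1 hjn hi1 (by omega) hbn (by omega)]
                    · simp only [map_add, map_smul,
                        fix j a b hj1 hjn ha hab hbn (by omega),
                        fix i a b hi1 hin ha hab hbn (by omega)]
    apply Finsupp.lhom_ext
    rintro ⟨⟨a, b⟩, ha, hab, hbn⟩ r
    have hr : (Finsupp.single (⟨(a, b), ⟨ha, hab, hbn⟩⟩ : KIdx n) r : KIdx n →₀ R)
        = r • kv R n a b := by
      rw [kv, dif_pos (⟨ha, hab, hbn⟩ : 1 ≤ a ∧ a < b ∧ b ≤ n)]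
      exact (Finsupp.smul_single_one _ r).symm
    simp only [LinearMap.comp_apply, hr, map_smul, comm a b ha hab hbn]
  intro i j hi1 hin hj1 hjn hij
  rcases hij with h | h
  · exact key i j hi1 hin hj1 hjn h
  · exact (key j i hj1 hjn hi1 hin h).symm
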